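/- Let X be the completion of c_00 under the norm ‖x‖ = sup_{π,π'} (Σ_{n∈D} u_{π(n)}|x_n| + Σ_{n∉D} v_{π'(n)}|x_n|), where D = {2^n : n ≥ 0}, u_n = 1/√n, v_n = 1/n, and π: D → ℕ, π': ℕ\D → ℕ range over bijections. Then the canonical basis of X is not reverse conservative: with A_N = {2^{2N+1}, …, 2^{3N}} and B_N = {3, 3², …, 3^N}, one has B_N < A_N, |A_N| = |B_N| = N, ‖1_{A_N}‖ = Σ_{n=1}^N 1/√n, ‖1_{B_N}‖ = Σ_{n=1}^N 1/n, and ‖1_{A_N}‖/‖1_{B_N}‖ → ∞. -/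

import Mathlib

open Finset Filter

noncomputable section

/-- The set `D = {2^k : k ≥ 0}`. -/
def Dset : Set ℕ := {n | ∃ k : ℕ, n = 2 ^ k}

attribute [local instance] Classical.propDecidable

/-- The norm `‖x‖ = sup_{π,π'} (∑_{n ∈ D} |x_n|/√(π(n)) + ∑_{n ∉ D} |x_n|/π'(n))`,
where `π : D → {1,2,…}` and `π' : ℕ∖D → {1,2,…}` range over bijections
(here realized as equivalences onto `ℕ = {0,1,…}`, with weights shifted by 1). -/
def Nrm (x : ℕ →₀ ℝ) : ℝ :=
  ⨆ (π : Dset ≃ ℕ) (π' : ↥(Dsetᶜ) ≃ ℕ),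
    ∑ n ∈ x.support,
      if h : n ∈ Dset then |x n| / Real.sqrt ((π ⟨n, h⟩ : ℝ) + 1)
      else |x n| / ((π' ⟨n, h⟩ : ℝ) + 1)

/-- `1_A` as a finitely supported sequence. -/
def ind (A : Finset ℕ) : ℕ →₀ ℝ := ∑ n ∈ A, Finsupp.single n (1 : ℝ)

/-- `A_N = {2^{2N+1}, …, 2^{3N}}`. -/
def AN (N : ℕ) : Finset ℕ := (Finset.Icc (2 * N + 1) (3 * N)).image (fun k => 2 ^ k)

/-- `B_N = {3, 3², …, 3^N}`. -/
def BN (N : ℕ) : Finset ℕ := (Finset.Icc 1 N).image (fun k => 3 ^ k)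

/-! ### Auxiliary lemmas -/

lemma ind_apply (A : Finset ℕ) (n : ℕ) : ind A n = if n ∈ A then 1 else 0 := by
  classical
  simp [ind, Finsupp.finset_sum_apply, Finsupp.single_apply]

lemma ind_support (A : Finset ℕ) : (ind A).support = A := by
  ext n
  simp [Finsupp.mem_support_iff, ind_apply]

lemma Dset_infinite : Dset.Infinite := by
  apply Set.infinite_of_injective_forall_mem (f := fun k : ℕ => 2 ^ k)
    (hi := Nat.pow_right_injective le_rfl)
  intro k; exact ⟨k, rfl⟩

lemma three_pow_not_mem {k : ℕ} (hk : 1 ≤ k) : (3 : ℕ) ^ k ∉ Dset := by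
  rintro ⟨m, hm⟩
  have h3 : (3 : ℕ) ^ k % 2 = 1 := by
    rw [Nat.pow_mod]; simp
  rcases Nat.eq_zero_or_pos m with rfl | hm'
  · simp at hm
    have : 3 ≤ 3 ^ k := Nat.le_self_pow (by omega) 3
    omega
  · have h2 : (2 : ℕ) ^ m % 2 = 0 := by
      have : (2:ℕ) ∣ 2 ^ m := dvd_pow_self 2 (by omega)
      omega
    omega

lemma Dsetc_infinite : Dsetᶜ.Infinite := by
  have hinj : Function.Injective fun k : ℕ => 3 ^ (k + 1) := by
    intro a b hab
    have := Nat.pow_right_injective (by norm_num : 2 ≤ 3) hab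
    omega
  apply Set.infinite_of_injective_forall_mem (hi := hinj)
  intro k
  exact three_pow_not_mem (by omega)

instance : Infinite ↥Dset := Dset_infinite.to_subtype
instance : Infinite ↥(Dsetᶜ) := Dsetc_infinite.to_subtype

lemma exists_perm_maps (S T : Finset ℕ) (h : S.card = T.card) :
    ∃ σ : Equiv.Perm ℕ, ∀ x ∈ S, σ x ∈ T := by
  have e1 : ((↑S : Set ℕ) : Type) ≃ ((↑T : Set ℕ) : Type) := by
    have : S ≃ T := Finset.equivOfCardEq h
    exact (Equiv.subtypeEquivRight (fun x => by simp)).trans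
      (this.trans (Equiv.subtypeEquivRight (fun x => by simp)))
  have hS : ((↑S : Set ℕ)ᶜ).Infinite := (S.finite_toSet).infinite_compl
  have hT : ((↑T : Set ℕ)ᶜ).Infinite := (T.finite_toSet).infinite_compl
  have iS : Infinite ((↑S : Set ℕ)ᶜ : Set ℕ) := hS.to_subtype
  have iT : Infinite ((↑T : Set ℕ)ᶜ : Set ℕ) := hT.to_subtype
  have e2 : (((↑S : Set ℕ)ᶜ : Set ℕ) : Type) ≃ (((↑T : Set ℕ)ᶜ : Set ℕ) : Type) :=
    Classical.choice nonempty_equiv_of_countable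
  refine ⟨(Equiv.Set.sumCompl (↑S : Set ℕ)).symm.trans ((e1.sumCongr e2).trans
    (Equiv.Set.sumCompl (↑T : Set ℕ))), ?_⟩
  intro x hx
  have hx' : x ∈ (↑S : Set ℕ) := hx
  rw [Equiv.trans_apply, Equiv.trans_apply, Equiv.Set.sumCompl_symm_apply_of_mem hx',
    Equiv.sumCongr_apply, Sum.map_inl, Equiv.Set.sumCompl_apply_inl]
  exact Finset.mem_coe.mp (e1 ⟨x, hx'⟩).2

lemma fin_le_strictMono {n : ℕ} (f : Fin n → ℕ) (hf : StrictMono f) (i : Fin n) :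
    (i : ℕ) ≤ f i := by
  have H : ∀ m (h : m < n), m ≤ f ⟨m, h⟩ := by
    intro m
    induction m with
    | zero => intro h; exact Nat.zero_le _
    | succ k ih =>
      intro h
      have hk : k < n := lt_trans (Nat.lt_succ_self k) h
      have h1 := ih hk
      have h2 : f ⟨k, hk⟩ < f ⟨k+1, h⟩ := hf (by simp [Fin.lt_def])
      omega
  exact H i.1 i.2

lemma sum_antitone_le {w : ℕ → ℝ} (hw : Antitone w) (S : Finset ℕ) :
    ∑ k ∈ S, w k ≤ ∑ k ∈ Finset.range S.card, w k := by
  set n := S.card with hn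
  let e := S.orderIsoOfFin hn.symm
  have h1 : ∑ k ∈ S, w k = ∑ i : Fin n, w (e i) := by
    rw [← Finset.sum_attach S w]
    exact (Fintype.sum_equiv e.toEquiv _ _ (fun i => rfl)).symm
  rw [h1, ← Fin.sum_univ_eq_sum_range]
  apply Finset.sum_le_sum
  intro i _
  exact hw (fin_le_strictMono (fun j => ((e j : ℕ))) (fun a b hab => by
    exact_mod_cast (e.strictMono hab)) i)

lemma sup_eq (w : ℕ → ℝ) (hw : Antitone w) (s : Set ℕ) [Infinite ↥s]
    (A : Finset ℕ) (hA : ∀ a ∈ A, a ∈ s) :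
    ⨆ π : ↥s ≃ ℕ, ∑ a ∈ A.attach, w (π ⟨a.1, hA a.1 a.2⟩)
      = ∑ k ∈ Finset.range A.card, w k := by
  set f : (↥s ≃ ℕ) → ℝ := fun π => ∑ a ∈ A.attach, w (π ⟨a.1, hA a.1 a.2⟩) with hf
  have hub : ∀ π : ↥s ≃ ℕ, f π ≤ ∑ k ∈ Finset.range A.card, w k := by
    intro π
    have hinj : Set.InjOn (fun a : {x // x ∈ A} => π ⟨a.1, hA a.1 a.2⟩) A.attach := by
      intro a _ b _ hab
      have := π.injective hab
      exact Subtype.ext (by simpa using this)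
    have h1 : f π = ∑ k ∈ A.attach.image (fun a => π ⟨a.1, hA a.1 a.2⟩), w k :=
      (Finset.sum_image hinj).symm
    have h2 : (A.attach.image (fun a => π ⟨a.1, hA a.1 a.2⟩)).card = A.card := by
      rw [Finset.card_image_of_injOn hinj, Finset.card_attach]
    rw [h1]
    calc _ ≤ ∑ k ∈ Finset.range (A.attach.image (fun a => π ⟨a.1, hA a.1 a.2⟩)).card, w k :=
          sum_antitone_le hw _
      _ = _ := by rw [h2]
  have e : ↥s ≃ ℕ := Classical.choice nonempty_equiv_of_countable
  haveI : Nonempty (↥s ≃ ℕ) := ⟨e⟩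
  have hinj0 : Set.InjOn (fun a : {x // x ∈ A} => e ⟨a.1, hA a.1 a.2⟩) A.attach := by
    intro a _ b _ hab
    have := e.injective hab
    exact Subtype.ext (by simpa using this)
  set S := A.attach.image (fun a => e ⟨a.1, hA a.1 a.2⟩) with hS
  have hScard : S.card = A.card := by
    rw [hS, Finset.card_image_of_injOn hinj0, Finset.card_attach]
  obtain ⟨σ, hσ⟩ := exists_perm_maps S (Finset.range A.card)
    (by rw [hScard, Finset.card_range])
  set π₀ : ↥s ≃ ℕ := e.trans σ with hπ₀
  have himg : S.image σ = Finset.range A.card := by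
    apply Finset.eq_of_subset_of_card_le
    · intro x hx
      obtain ⟨y, hy, rfl⟩ := Finset.mem_image.mp hx
      exact hσ y hy
    · rw [Finset.card_image_of_injective _ σ.injective, hScard, Finset.card_range]
  have hval : f π₀ = ∑ k ∈ Finset.range A.card, w k := by
    have hinj1 : Set.InjOn (fun a : {x // x ∈ A} => π₀ ⟨a.1, hA a.1 a.2⟩) A.attach := by
      intro a _ b _ hab
      have := π₀.injective hab
      exact Subtype.ext (by simpa using this)
    have h1 : f π₀ = ∑ k ∈ A.attach.image (fun a => π₀ ⟨a.1, hA a.1 a.2⟩), w k :=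
      (Finset.sum_image hinj1).symm
    have h2 : A.attach.image (fun a => π₀ ⟨a.1, hA a.1 a.2⟩) = S.image σ := by
      rw [hS, Finset.image_image]; rfl
    rw [h1, h2, himg]
  refine le_antisymm (ciSup_le hub) ?_
  rw [← hval]
  exact le_ciSup ⟨∑ k ∈ Finset.range A.card, w k, by rintro _ ⟨π, rfl⟩; exact hub π⟩ π₀

lemma antitone_ws : Antitone (fun k : ℕ => 1 / Real.sqrt ((k : ℝ) + 1)) := by
  intro a b hab
  have h1 : (0:ℝ) < Real.sqrt ((a:ℝ)+1) := Real.sqrt_pos.mpr (by positivity)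
  apply one_div_le_one_div_of_le h1
  apply Real.sqrt_le_sqrt
  have : (a:ℝ) ≤ b := Nat.cast_le.mpr hab
  linarith

lemma antitone_wh : Antitone (fun k : ℕ => 1 / ((k : ℝ) + 1)) := by
  intro a b hab
  have h1 : (0:ℝ) < (a:ℝ) + 1 := by positivity
  apply one_div_le_one_div_of_le h1
  have : (a:ℝ) ≤ b := Nat.cast_le.mpr hab
  linarith

lemma Nrm_ind_D (A : Finset ℕ) (hA : ∀ a ∈ A, a ∈ Dset) :
    Nrm (ind A) = ∑ k ∈ Finset.range A.card, 1 / Real.sqrt ((k : ℝ) + 1) := by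
  have hsum : ∀ (π : Dset ≃ ℕ) (π' : ↥(Dsetᶜ) ≃ ℕ),
      (∑ n ∈ (ind A).support,
        if h : n ∈ Dset then |ind A n| / Real.sqrt ((π ⟨n, h⟩ : ℝ) + 1)
        else |ind A n| / ((π' ⟨n, h⟩ : ℝ) + 1))
      = ∑ a ∈ A.attach, (fun k : ℕ => 1 / Real.sqrt ((k : ℝ) + 1)) (π ⟨a.1, hA a.1 a.2⟩) := by
    intro π π'
    rw [ind_support, ← Finset.sum_attach]
    refine Finset.sum_congr rfl ?_
    intro a _
    rw [dif_pos (hA a.1 a.2), ind_apply, if_pos a.2, abs_one]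
  unfold Nrm
  have h1 : ∀ π : Dset ≃ ℕ, (⨆ π' : ↥(Dsetᶜ) ≃ ℕ, ∑ n ∈ (ind A).support,
      if h : n ∈ Dset then |ind A n| / Real.sqrt ((π ⟨n, h⟩ : ℝ) + 1)
      else |ind A n| / ((π' ⟨n, h⟩ : ℝ) + 1))
      = ∑ a ∈ A.attach, (fun k : ℕ => 1 / Real.sqrt ((k : ℝ) + 1)) (π ⟨a.1, hA a.1 a.2⟩) := by
    intro π
    rw [show (fun π' : ↥(Dsetᶜ) ≃ ℕ => ∑ n ∈ (ind A).support,
      if h : n ∈ Dset then |ind A n| / Real.sqrt ((π ⟨n, h⟩ : ℝ) + 1)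
      else |ind A n| / ((π' ⟨n, h⟩ : ℝ) + 1)) = fun _ => ∑ a ∈ A.attach,
        (fun k : ℕ => 1 / Real.sqrt ((k : ℝ) + 1)) (π ⟨a.1, hA a.1 a.2⟩) from funext (hsum π)]
    exact ciSup_const
  simp_rw [h1]
  exact sup_eq _ antitone_ws Dset A hA

lemma Nrm_ind_Dc (B : Finset ℕ) (hB : ∀ b ∈ B, b ∈ Dsetᶜ) :
    Nrm (ind B) = ∑ k ∈ Finset.range B.card, 1 / ((k : ℝ) + 1) := by
  have hsum : ∀ (π : Dset ≃ ℕ) (π' : ↥(Dsetᶜ) ≃ ℕ),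
      (∑ n ∈ (ind B).support,
        if h : n ∈ Dset then |ind B n| / Real.sqrt ((π ⟨n, h⟩ : ℝ) + 1)
        else |ind B n| / ((π' ⟨n, h⟩ : ℝ) + 1))
      = ∑ b ∈ B.attach, (fun k : ℕ => 1 / ((k : ℝ) + 1)) (π' ⟨b.1, hB b.1 b.2⟩) := by
    intro π π'
    rw [ind_support, ← Finset.sum_attach]
    refine Finset.sum_congr rfl ?_
    intro b _
    rw [dif_neg (hB b.1 b.2), ind_apply, if_pos b.2, abs_one]
  unfold Nrm
  have h1 : ∀ π : Dset ≃ ℕ, (⨆ π' : ↥(Dsetᶜ) ≃ ℕ, ∑ n ∈ (ind B).support,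
      if h : n ∈ Dset then |ind B n| / Real.sqrt ((π ⟨n, h⟩ : ℝ) + 1)
      else |ind B n| / ((π' ⟨n, h⟩ : ℝ) + 1))
      = ∑ k ∈ Finset.range B.card, 1 / ((k : ℝ) + 1) := by
    intro π
    rw [show (fun π' : ↥(Dsetᶜ) ≃ ℕ => ∑ n ∈ (ind B).support,
      if h : n ∈ Dset then |ind B n| / Real.sqrt ((π ⟨n, h⟩ : ℝ) + 1)
      else |ind B n| / ((π' ⟨n, h⟩ : ℝ) + 1)) = fun π' => ∑ b ∈ B.attach,
        (fun k : ℕ => 1 / ((k : ℝ) + 1)) (π' ⟨b.1, hB b.1 b.2⟩) from funext (hsum π)]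
    exact sup_eq _ antitone_wh (Dsetᶜ) B hB
  simp_rw [h1]
  exact ciSup_const

lemma range_to_Icc_sqrt (N : ℕ) :
    ∑ k ∈ Finset.range N, 1 / Real.sqrt ((k : ℝ) + 1)
      = ∑ n ∈ Finset.Icc 1 N, 1 / Real.sqrt (n : ℝ) := by
  rw [← Finset.Ico_add_one_right_eq_Icc, Finset.sum_Ico_eq_sum_range]
  simp only [Nat.add_sub_cancel_left, Nat.add_sub_cancel]
  refine Finset.sum_congr rfl ?_
  intro k _
  push_cast
  ring_nf

lemma range_to_Icc_harm (N : ℕ) :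
    ∑ k ∈ Finset.range N, 1 / ((k : ℝ) + 1) = ∑ n ∈ Finset.Icc 1 N, 1 / (n : ℝ) := by
  rw [← Finset.Ico_add_one_right_eq_Icc, Finset.sum_Ico_eq_sum_range]
  simp only [Nat.add_sub_cancel_left, Nat.add_sub_cancel]
  refine Finset.sum_congr rfl ?_
  intro k _
  push_cast
  ring_nf

lemma AN_card (N : ℕ) : (AN N).card = N := by
  rw [AN, Finset.card_image_of_injective _ (Nat.pow_right_injective le_rfl), Nat.card_Icc]
  omega

lemma BN_card (N : ℕ) : (BN N).card = N := by
  rw [BN, Finset.card_image_of_injective _ (Nat.pow_right_injective (by norm_num : 2 ≤ 3)),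
    Nat.card_Icc]
  omega

lemma AN_subset_D (N : ℕ) : ∀ a ∈ AN N, a ∈ Dset := by
  intro a ha
  rw [AN, Finset.mem_image] at ha
  obtain ⟨k, _, rfl⟩ := ha
  exact ⟨k, rfl⟩

lemma BN_subset_Dc (N : ℕ) : ∀ b ∈ BN N, b ∈ Dsetᶜ := by
  intro b hb
  rw [BN, Finset.mem_image] at hb
  obtain ⟨k, hk, rfl⟩ := hb
  rw [Finset.mem_Icc] at hk
  exact three_pow_not_mem hk.1

lemma Nrm_AN (N : ℕ) : Nrm (ind (AN N)) = ∑ n ∈ Finset.Icc 1 N, 1 / Real.sqrt (n : ℝ) := by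
  rw [Nrm_ind_D _ (AN_subset_D N), AN_card, range_to_Icc_sqrt]

lemma Nrm_BN (N : ℕ) : Nrm (ind (BN N)) = ∑ n ∈ Finset.Icc 1 N, 1 / (n : ℝ) := by
  rw [Nrm_ind_Dc _ (BN_subset_Dc N), BN_card, range_to_Icc_harm]

lemma BN_lt_AN {N : ℕ} (hN : 1 ≤ N) : ∀ b ∈ BN N, ∀ a ∈ AN N, b < a := by
  intro b hb a ha
  rw [BN, Finset.mem_image] at hb
  rw [AN, Finset.mem_image] at ha
  obtain ⟨k, hk, rfl⟩ := hb
  obtain ⟨j, hj, rfl⟩ := ha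
  rw [Finset.mem_Icc] at hk hj
  calc 3 ^ k ≤ 3 ^ N := Nat.pow_le_pow_right (by norm_num) hk.2
    _ < 4 ^ N := Nat.pow_lt_pow_left (by norm_num) (by omega)
    _ = 2 ^ (2 * N) := by rw [show (4:ℕ) = 2^2 by norm_num, ← pow_mul]
    _ < 2 ^ (2 * N + 1) := Nat.pow_lt_pow_right (by norm_num) (by omega)
    _ ≤ 2 ^ j := Nat.pow_le_pow_right (by norm_num) hj.1

lemma tendsto_aux : Tendsto (fun x : ℝ => Real.sqrt x / (1 + Real.log x)) atTop atTop := by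
  have hlo : (fun x : ℝ => 1 + Real.log x) =o[atTop] Real.sqrt := by
    have h1 : (fun _ : ℝ => (1:ℝ)) =o[atTop] Real.sqrt := by
      rw [Asymptotics.isLittleO_const_left]
      right
      have hs : Tendsto Real.sqrt atTop atTop := by
        rw [show Real.sqrt = fun x : ℝ => x ^ (1/2 : ℝ) from funext Real.sqrt_eq_rpow]
        exact tendsto_rpow_atTop (by norm_num)
      exact hs.congr (fun x => (Real.norm_of_nonneg (Real.sqrt_nonneg x)).symm)
    have h2 : Real.log =o[atTop] Real.sqrt := by
      have h := isLittleO_log_rpow_atTop (by norm_num : (0:ℝ) < 1/2)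
      rw [show Real.sqrt = fun x : ℝ => x ^ (1/2 : ℝ) from funext Real.sqrt_eq_rpow]
      exact h
    exact h1.add h2
  have h0 : Tendsto (fun x : ℝ => (1 + Real.log x) / Real.sqrt x) atTop (nhds 0) :=
    hlo.tendsto_div_nhds_zero
  have hpos : ∀ᶠ x : ℝ in atTop, 0 < (1 + Real.log x) / Real.sqrt x := by
    filter_upwards [eventually_ge_atTop (1:ℝ)] with x hx
    have h1 : 0 < Real.sqrt x := Real.sqrt_pos.mpr (by linarith)
    have h2 : 0 ≤ Real.log x := Real.log_nonneg hx
    positivity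
  have h0' : Tendsto (fun x : ℝ => (1 + Real.log x) / Real.sqrt x) atTop
      (nhdsWithin 0 (Set.Ioi 0)) := by
    rw [tendsto_nhdsWithin_iff]
    exact ⟨h0, hpos⟩
  have hcomp := tendsto_inv_nhdsGT_zero.comp h0'
  refine hcomp.congr ?_
  intro x
  simp [Function.comp, inv_div]

lemma sqrt_le_SA {N : ℕ} (hN : 1 ≤ N) :
    Real.sqrt (N : ℝ) ≤ ∑ n ∈ Finset.Icc 1 N, 1 / Real.sqrt (n : ℝ) := by
  have hterm : ∀ n ∈ Finset.Icc 1 N, 1 / Real.sqrt (N : ℝ) ≤ 1 / Real.sqrt (n : ℝ) := by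
    intro n hn
    rw [Finset.mem_Icc] at hn
    have h1 : (0:ℝ) < Real.sqrt (n : ℝ) := Real.sqrt_pos.mpr (by exact_mod_cast hn.1)
    exact one_div_le_one_div_of_le h1 (Real.sqrt_le_sqrt (by exact_mod_cast hn.2))
  have hcard := Finset.card_nsmul_le_sum (Finset.Icc 1 N) _ _ hterm
  rw [Nat.card_Icc, Nat.add_sub_cancel, nsmul_eq_mul] at hcard
  have hNpos : (0:ℝ) < N := by exact_mod_cast hN
  calc Real.sqrt (N:ℝ) = (N:ℝ) / Real.sqrt (N:ℝ) := (Real.div_sqrt).symm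
    _ = (N:ℝ) * (1 / Real.sqrt (N:ℝ)) := by ring
    _ ≤ _ := hcard

lemma SB_le_log {N : ℕ} :
    ∑ n ∈ Finset.Icc 1 N, 1 / (n : ℝ) ≤ 1 + Real.log N := by
  have h1 : ∑ n ∈ Finset.Icc 1 N, 1 / (n : ℝ) = (harmonic N : ℝ) := by
    rw [harmonic_eq_sum_Icc]
    push_cast
    simp [one_div]
  rw [h1]
  exact harmonic_le_one_add_log N

lemma SB_pos {N : ℕ} (hN : 1 ≤ N) : 0 < ∑ n ∈ Finset.Icc 1 N, 1 / (n : ℝ) := by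
  apply Finset.sum_pos
  · intro n hn
    rw [Finset.mem_Icc] at hn
    have : (0:ℝ) < n := by exact_mod_cast hn.1
    positivity
  · exact ⟨1, Finset.mem_Icc.mpr ⟨le_refl 1, hN⟩⟩

lemma tendsto_ratio : Tendsto (fun N : ℕ => Nrm (ind (AN N)) / Nrm (ind (BN N))) atTop atTop := by
  have hfun : (fun N : ℕ => Nrm (ind (AN N)) / Nrm (ind (BN N)))
      = fun N : ℕ => (∑ n ∈ Finset.Icc 1 N, 1 / Real.sqrt (n : ℝ))
          / (∑ n ∈ Finset.Icc 1 N, 1 / (n : ℝ)) := by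
    funext N
    rw [Nrm_AN, Nrm_BN]
  rw [hfun]
  have hg : Tendsto (fun N : ℕ => Real.sqrt (N:ℝ) / (1 + Real.log (N:ℝ))) atTop atTop :=
    tendsto_aux.comp tendsto_natCast_atTop_atTop
  apply tendsto_atTop_mono' atTop ?_ hg
  filter_upwards [eventually_ge_atTop 1] with N hN
  have h1 := sqrt_le_SA hN
  have h2 := @SB_le_log N
  have h3 := SB_pos hN
  have h4 : (0:ℝ) ≤ ∑ n ∈ Finset.Icc 1 N, 1 / Real.sqrt (n : ℝ) :=
    le_trans (Real.sqrt_nonneg _) h1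
  exact div_le_div₀ h4 h1 h3 h2

/-- the canonical basis of `X` is not reverse conservative,
witnessed by `A_N`, `B_N`. -/
theorem stmt_14 :
    (∀ N : ℕ, 1 ≤ N →
      (AN N).card = N ∧ (BN N).card = N ∧
      (∀ b ∈ BN N, ∀ a ∈ AN N, b < a) ∧
      Nrm (ind (AN N)) = ∑ n ∈ Finset.Icc 1 N, 1 / Real.sqrt (n : ℝ) ∧
      Nrm (ind (BN N)) = ∑ n ∈ Finset.Icc 1 N, 1 / (n : ℝ)) ∧
    Tendsto (fun N : ℕ => Nrm (ind (AN N)) / Nrm (ind (BN N))) atTop atTop ∧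
    ¬ (∃ C : ℝ, ∀ A B : Finset ℕ, (∀ b ∈ B, ∀ a ∈ A, b < a) → A.card ≤ B.card →
        Nrm (ind A) ≤ C * Nrm (ind B)) := by
  refine ⟨fun N hN => ⟨AN_card N, BN_card N, BN_lt_AN hN, Nrm_AN N, Nrm_BN N⟩,
    tendsto_ratio, ?_⟩
  rintro ⟨C, hC⟩
  obtain ⟨N, hN⟩ := ((tendsto_ratio.eventually_gt_atTop C).and (eventually_ge_atTop 1)).exists
  obtain ⟨hNC, hN1⟩ := hN
  have hcard : (AN N).card ≤ (BN N).card := by rw [AN_card, BN_card]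
  have hle := hC (AN N) (BN N) (BN_lt_AN hN1) hcard
  have hpos : 0 < Nrm (ind (BN N)) := by rw [Nrm_BN]; exact SB_pos hN1
  have : Nrm (ind (AN N)) / Nrm (ind (BN N)) ≤ C := by
    rw [div_le_iff₀ hpos]
    exact hle
  linarith
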